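/- Let α > −1/2 and c > 0. For every n ∈ ℕ and every x > 0 one has |j^α_{n,c}(x)| ≤ √(2(2n+α+1)) · (cx/2)^{2n+α+1} / (√x · Γ(2n+α+2)). Consequently, for every R > 0 there exists a constant C > 0 such that sup_{0 < x ≤ R} |j^α_{n,c}(x)| ≤ C n^{−2} for all n ≥ 1. -/

import Mathlib

open MeasureTheory Real

/-- The Bessel function of the first kind `J_ν`, defined for `x > 0` by its power series
`J_ν(x) = Σ_{m=0}^∞ (−1)^m (x/2)^{2m+ν} / (m! Γ(m+ν+1))`, where `1/Γ` vanishes at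
nonpositive integers (as does Mathlib's `Real.Gamma`). -/
noncomputable def besselJ (ν : ℝ) (x : ℝ) : ℝ :=
  ∑' m : ℕ, (-1 : ℝ) ^ m * (x / 2) ^ (2 * (m : ℝ) + ν) /
    ((m.factorial : ℝ) * Real.Gamma ((m : ℝ) + ν + 1))

/-- The Hankel spherical Bessel function
`j^α_{n,c}(x) = √(2(2n+α+1)) · J_{2n+α+1}(cx) / √x` for `x > 0`. -/
noncomputable def hankelSphBesselJ (α c : ℝ) (n : ℕ) (x : ℝ) : ℝ :=
  Real.sqrt (2 * (2 * (n : ℝ) + α + 1)) * besselJ (2 * (n : ℝ) + α + 1) (c * x) / Real.sqrt x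

namespace BesselAux

lemma gamma_add_nat (s : ℝ) (hs : 0 < s) (m : ℕ) :
    Real.Gamma (s + m) = Real.Gamma s * ∏ j ∈ Finset.range m, (s + j) := by
  induction m with
  | zero => simp
  | succ k ih =>
    have h1 : (s + (k : ℝ)) ≠ 0 := by positivity
    have h2 : s + ((k + 1 : ℕ) : ℝ) = (s + k) + 1 := by push_cast; ring
    rw [h2, Real.Gamma_add_one h1, ih, Finset.prod_range_succ]; ring

lemma gamma_le_gamma_add_nat {s : ℝ} (hs : 1 ≤ s) (m : ℕ) :
    Real.Gamma s ≤ Real.Gamma (s + m) := by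
  have hs0 : 0 < s := by linarith
  rw [gamma_add_nat s hs0 m]
  have h1 : (1 : ℝ) ≤ ∏ j ∈ Finset.range m, (s + j) := by
    calc (1:ℝ) = ∏ _j ∈ Finset.range m, (1:ℝ) := by simp
    _ ≤ ∏ j ∈ Finset.range m, (s + j) := by
        apply Finset.prod_le_prod (fun j _ => by norm_num)
        intro j _
        have : (0:ℝ) ≤ j := Nat.cast_nonneg j
        linarith
  nlinarith [Real.Gamma_pos_of_pos hs0]

/-- coefficients of `₀F₁(b; -t)/Γ(b)` -/
noncomputable def c (b : ℝ) (m : ℕ) : ℝ :=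
  (-1) ^ m / ((m.factorial : ℝ) * Real.Gamma ((m : ℝ) + b))

/-- formal derivative of coefficients -/
def D (d : ℕ → ℝ) (m : ℕ) : ℝ := ((m : ℝ) + 1) * d (m + 1)

/-- sum of a power series -/
noncomputable def S (d : ℕ → ℝ) (t : ℝ) : ℝ := ∑' m, d m * t ^ m

lemma summable_aux {b : ℝ} (hb : 1 ≤ b) (r : ℝ) :
    Summable (fun m : ℕ => r ^ m / ((m.factorial : ℝ) * Real.Gamma ((m : ℝ) + b))) := by
  have hb0 : 0 < b := by linarith
  apply Summable.of_abs
  have h := (Real.summable_pow_div_factorial |r|).mul_left (1 / Real.Gamma b)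
  apply h.of_nonneg_of_le (fun m => abs_nonneg _)
  intro m
  have hg : Real.Gamma b ≤ Real.Gamma ((m : ℝ) + b) := by
    have := gamma_le_gamma_add_nat hb m
    rwa [add_comm] at this
  have hgb : 0 < Real.Gamma b := Real.Gamma_pos_of_pos hb0
  have hgm : 0 < Real.Gamma ((m : ℝ) + b) := by
    apply Real.Gamma_pos_of_pos; positivity
  have hf : (0:ℝ) < m.factorial := by exact_mod_cast m.factorial_pos
  rw [abs_div, abs_of_pos (by positivity : (0:ℝ) < (m.factorial : ℝ) * Real.Gamma ((m:ℝ)+b)),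
    abs_pow]
  rw [div_le_iff₀ (by positivity)]
  have : (1 / Real.Gamma b) * (|r| ^ m / m.factorial) * ((m.factorial:ℝ) * Real.Gamma ((m:ℝ)+b))
      = |r| ^ m * (Real.Gamma ((m:ℝ)+b) / Real.Gamma b) := by
    field_simp
  rw [this]
  have h1 : (1:ℝ) ≤ Real.Gamma ((m:ℝ)+b) / Real.Gamma b := (one_le_div hgb).mpr hg
  nlinarith [pow_nonneg (abs_nonneg r) m]

lemma c_abs_aux {b : ℝ} (hb : 0 < b) (m : ℕ) :
    |c b m| = 1 / ((m.factorial : ℝ) * Real.Gamma ((m : ℝ) + b)) := by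
  have hgm : 0 < Real.Gamma ((m : ℝ) + b) := by apply Real.Gamma_pos_of_pos; positivity
  have hf : (0:ℝ) < m.factorial := by exact_mod_cast m.factorial_pos
  rw [c, abs_div, abs_pow, abs_neg, abs_one, one_pow, abs_of_pos (by positivity)]

lemma D_c {b : ℝ} (hb : 0 < b) (m : ℕ) :
    D (c b) m = (-1) ^ (m + 1) / ((m.factorial : ℝ) * Real.Gamma ((m : ℝ) + 1 + b)) := by
  have hgm : 0 < Real.Gamma ((m : ℝ) + 1 + b) := by apply Real.Gamma_pos_of_pos; positivity
  have hf : (0:ℝ) < m.factorial := by exact_mod_cast m.factorial_pos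
  rw [D, c]
  have h1 : (((m+1 : ℕ)).factorial : ℝ) = ((m:ℝ)+1) * m.factorial := by
    rw [Nat.factorial_succ]; push_cast; ring
  have h2 : ((m+1 : ℕ) : ℝ) + b = (m : ℝ) + 1 + b := by push_cast; ring
  rw [h1, h2]
  field_simp

lemma D_D_c {b : ℝ} (hb : 0 < b) (m : ℕ) :
    D (D (c b)) m = (-1) ^ m / ((m.factorial : ℝ) * Real.Gamma ((m : ℝ) + 2 + b)) := by
  have hgm : 0 < Real.Gamma ((m : ℝ) + 2 + b) := by apply Real.Gamma_pos_of_pos; positivity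
  have hf : (0:ℝ) < m.factorial := by exact_mod_cast m.factorial_pos
  rw [D, D_c hb]
  have h1 : (((m+1 : ℕ)).factorial : ℝ) = ((m:ℝ)+1) * m.factorial := by
    rw [Nat.factorial_succ]; push_cast; ring
  have h2 : ((m+1 : ℕ) : ℝ) + 1 + b = (m : ℝ) + 2 + b := by push_cast; ring
  rw [h1, h2, pow_succ, pow_succ]
  field_simp


def Nice (d : ℕ → ℝ) : Prop := ∀ r : ℝ, Summable (fun m : ℕ => |d m| * r ^ m)

lemma Nice.summable (hd : Nice d) (t : ℝ) : Summable (fun m : ℕ => d m * t ^ m) := by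
  apply Summable.of_abs
  apply (hd |t|).of_nonneg_of_le (fun m => abs_nonneg _)
  intro m
  rw [abs_mul, abs_pow]

lemma hasDerivAt_S (hd : Nice d) (hd' : Nice (D d)) (t : ℝ) :
    HasDerivAt (S d) (S (D d) t) t := by
  set r : ℝ := |t| + 1 with hr
  have hr0 : 0 < r := by positivity
  set u : ℕ → ℝ := fun n => (n : ℝ) * |d n| * r ^ (n - 1) with hu
  have hu1 : ∀ m : ℕ, u (m + 1) = ((m : ℝ) + 1) * |d (m + 1)| * r ^ m := by
    intro m
    simp only [hu, Nat.add_sub_cancel]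
    push_cast
    ring
  have hu_s : Summable u := by
    have h1 : Summable (fun m : ℕ => u (m + 1)) := by
      apply ((hd' r).of_nonneg_of_le (fun m => by rw [hu1]; positivity))
      intro m
      rw [hu1, D, abs_mul, abs_of_pos (by positivity : (0:ℝ) < (m:ℝ)+1)]
    exact (summable_nat_add_iff 1).mp h1
  have hbd : ∀ (n : ℕ) (y : ℝ), y ∈ Metric.ball (0:ℝ) r →
      ‖d n * ((n : ℝ) * y ^ (n - 1))‖ ≤ u n := by
    intro n y hy
    have hyr : |y| ≤ r := by
      rw [Metric.mem_ball, Real.dist_eq, sub_zero] at hy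
      linarith
    rw [norm_mul, norm_mul, Real.norm_eq_abs, Real.norm_eq_abs, Real.norm_eq_abs,
      Nat.abs_cast, abs_pow, hu]
    have h2 : |y| ^ (n - 1) ≤ r ^ (n - 1) := pow_le_pow_left₀ (abs_nonneg y) hyr _
    have h3 : (0:ℝ) ≤ (n:ℝ) * |d n| := by positivity
    calc |d n| * ((n:ℝ) * |y| ^ (n-1)) = (n:ℝ) * |d n| * |y| ^ (n-1) := by ring
    _ ≤ (n:ℝ) * |d n| * r ^ (n-1) := by
        apply mul_le_mul_of_nonneg_left h2 h3
  have key := hasDerivAt_tsum_of_isPreconnected hu_s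
    (Metric.isOpen_ball (x := (0:ℝ)) (ε := r))
    ((convex_ball (0:ℝ) r).isPreconnected)
    (g := fun n y => d n * y ^ n) (g' := fun n y => d n * ((n : ℝ) * y ^ (n - 1)))
    (fun n y _ => (hasDerivAt_pow n y).const_mul (d n))
    hbd (Metric.mem_ball_self hr0) (hd.summable 0)
    (by rw [Metric.mem_ball, Real.dist_eq, sub_zero]; simp [hr]; linarith [abs_nonneg t])
  -- now identify the sum of derivatives with S (D d) t
  have hsum : Summable (fun n : ℕ => d n * ((n : ℝ) * t ^ (n - 1))) := by
    apply Summable.of_norm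
    apply hu_s.of_nonneg_of_le (fun n => norm_nonneg _)
    intro n
    exact hbd n t (by rw [Metric.mem_ball, Real.dist_eq, sub_zero]; simp [hr])
  have hid : (∑' n : ℕ, d n * ((n : ℝ) * t ^ (n - 1))) = S (D d) t := by
    rw [S, Summable.tsum_eq_zero_add hsum]
    simp only [Nat.cast_zero, zero_mul, mul_zero, zero_add, Nat.add_sub_cancel]
    apply tsum_congr
    intro m
    rw [D]
    push_cast
    ring
  rw [← hid]
  exact key



lemma nice_c {b : ℝ} (hb : 1 ≤ b) : Nice (c b) := by
  intro r
  have h := summable_aux hb r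
  apply h.congr
  intro m
  rw [c_abs_aux (by linarith : (0:ℝ) < b) m]
  ring

lemma nice_D_c {b : ℝ} (hb : 1 ≤ b) : Nice (D (c b)) := by
  intro r
  have h := summable_aux (b := b + 1) (by linarith) r
  apply h.congr
  intro m
  have hb0 : (0:ℝ) < b := by linarith
  have hgm : 0 < Real.Gamma ((m : ℝ) + 1 + b) := by apply Real.Gamma_pos_of_pos; positivity
  have hf : (0:ℝ) < m.factorial := by exact_mod_cast m.factorial_pos
  rw [D_c hb0, abs_div, abs_pow, abs_neg, abs_one, one_pow, abs_of_pos (by positivity),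
    show (m : ℝ) + (b + 1) = (m : ℝ) + 1 + b by ring]
  ring

lemma nice_D_D_c {b : ℝ} (hb : 1 ≤ b) : Nice (D (D (c b))) := by
  intro r
  have h := summable_aux (b := b + 2) (by linarith) r
  apply h.congr
  intro m
  have hb0 : (0:ℝ) < b := by linarith
  have hgm : 0 < Real.Gamma ((m : ℝ) + 2 + b) := by apply Real.Gamma_pos_of_pos; positivity
  have hf : (0:ℝ) < m.factorial := by exact_mod_cast m.factorial_pos
  rw [D_D_c hb0, abs_div, abs_pow, abs_neg, abs_one, one_pow, abs_of_pos (by positivity),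
    show (m : ℝ) + (b + 2) = (m : ℝ) + 2 + b by ring]
  ring

lemma coeff_rec {b : ℝ} (hb : 0 < b) (k : ℕ) :
    ((k : ℝ) + 1) * ((k : ℝ) + b) * c b (k + 1) = - c b k := by
  have hkb : ((k : ℝ) + b) ≠ 0 := by positivity
  have hg : Real.Gamma ((k : ℝ) + b + 1) = ((k : ℝ) + b) * Real.Gamma ((k : ℝ) + b) :=
    Real.Gamma_add_one hkb
  have hgm : 0 < Real.Gamma ((k : ℝ) + b) := by apply Real.Gamma_pos_of_pos; positivity
  have hf : (0:ℝ) < k.factorial := by exact_mod_cast k.factorial_pos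
  rw [c, c]
  have h1 : (((k+1 : ℕ)).factorial : ℝ) = ((k:ℝ)+1) * k.factorial := by
    rw [Nat.factorial_succ]; push_cast; ring
  have h2 : ((k+1 : ℕ) : ℝ) + b = (k : ℝ) + b + 1 := by push_cast; ring
  rw [h1, h2, hg, pow_succ]
  field_simp

lemma ode {b : ℝ} (hb : 1 ≤ b) (t : ℝ) :
    t * S (D (D (c b))) t + b * S (D (c b)) t + S (c b) t = 0 := by
  have hb0 : (0:ℝ) < b := by linarith
  -- G k = k * (k+1) * c b (k+1) * t^k
  set G : ℕ → ℝ := fun k => (k : ℝ) * ((k : ℝ) + 1) * c b (k + 1) * t ^ k with hG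
  have hGsum : Summable G := by
    apply Summable.of_abs
    apply ((nice_D_c hb (2 * |t|)).of_nonneg_of_le (fun k => abs_nonneg _))
    intro k
    have h1 : |G k| = (k : ℝ) * |D (c b) k| * |t| ^ k := by
      rw [hG]
      simp only [abs_mul, abs_pow, D, abs_mul]
      rw [abs_of_nonneg (Nat.cast_nonneg k : (0:ℝ) ≤ k),
        abs_of_pos (by positivity : (0:ℝ) < (k:ℝ)+1)]
      ring
    rw [h1]
    have h2 : (k : ℝ) * |t| ^ k ≤ (2 * |t|) ^ k := by
      rw [mul_pow]
      have h3 : (k : ℝ) ≤ 2 ^ k := by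
        exact_mod_cast (Nat.lt_two_pow_self (n := k)).le
      have := pow_nonneg (abs_nonneg t) k
      nlinarith
    calc (k : ℝ) * |D (c b) k| * |t| ^ k = |D (c b) k| * ((k:ℝ) * |t| ^ k) := by ring
    _ ≤ |D (c b) k| * (2 * |t|) ^ k := by
        apply mul_le_mul_of_nonneg_left h2 (abs_nonneg _)
  have hshift : t * S (D (D (c b))) t = ∑' k, G k := by
    rw [S, ← tsum_mul_left, Summable.tsum_eq_zero_add hGsum]
    have hG0 : G 0 = 0 := by simp [hG]
    rw [hG0, zero_add]
    apply tsum_congr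
    intro m
    rw [hG, D, D]
    push_cast
    ring
  have h1 : Summable (fun k : ℕ => b * (D (c b) k * t ^ k)) :=
    ((nice_D_c hb).summable t).mul_left b
  have h2 : Summable (fun k : ℕ => c b k * t ^ k) := (nice_c hb).summable t
  rw [hshift, S, S, ← tsum_mul_left (a := b), ← Summable.tsum_add hGsum h1, ← Summable.tsum_add (hGsum.add h1) h2]
  rw [show (0:ℝ) = ∑' (_ : ℕ), (0:ℝ) by rw [tsum_zero]]
  apply tsum_congr
  intro k
  have := coeff_rec hb0 k
  have hD : D (c b) k = ((k:ℝ)+1) * c b (k+1) := rfl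
  rw [hD, hG]
  linear_combination t ^ k * this


lemma S_zero (d : ℕ → ℝ) : S d 0 = d 0 := by
  rw [S]
  rw [tsum_eq_single 0 (fun m hm => by rw [zero_pow hm, mul_zero])]
  simp

lemma c_zero {b : ℝ} (hb : 0 < b) : c b 0 = 1 / Real.Gamma b := by
  simp [c]

lemma abs_S_c_le {b : ℝ} (hb : 1 ≤ b) {t : ℝ} (ht : 0 ≤ t) :
    |S (c b) t| ≤ 1 / Real.Gamma b := by
  have hb0 : (0:ℝ) < b := by linarith
  have hg : ∀ s : ℝ, HasDerivAt (S (c b)) (S (D (c b)) s) s :=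
    hasDerivAt_S (nice_c hb) (nice_D_c hb)
  have hg' : ∀ s : ℝ, HasDerivAt (S (D (c b))) (S (D (D (c b))) s) s :=
    hasDerivAt_S (nice_D_c hb) (nice_D_D_c hb)
  set E : ℝ → ℝ := fun s => (S (c b) s) ^ 2 + s * (S (D (c b)) s) ^ 2 with hE
  have hEderiv : ∀ s : ℝ, HasDerivAt E ((1 - 2 * b) * (S (D (c b)) s) ^ 2) s := by
    intro s
    have h1 : HasDerivAt (fun y => (S (c b) y) ^ 2 + y * (S (D (c b)) y) ^ 2)
        (2 * S (c b) s ^ 1 * S (D (c b)) s +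
          (1 * (S (D (c b)) s) ^ 2 + s * (2 * S (D (c b)) s ^ 1 * S (D (D (c b))) s))) s := by
      exact ((hg s).pow 2).add ((hasDerivAt_id s).mul ((hg' s).pow 2))
    have hode := ode hb s
    convert h1 using 1
    linear_combination (-2 * S (D (c b)) s) * hode
  have hanti : Antitone E := by
    apply antitone_of_deriv_nonpos
    · intro s
      exact (hEderiv s).differentiableAt
    · intro s
      rw [(hEderiv s).deriv]
      nlinarith [sq_nonneg (S (D (c b)) s)]
  have hE0 : E 0 = (1 / Real.Gamma b) ^ 2 := by
    rw [hE]
    simp [S_zero, c_zero hb0]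
  have hle : (S (c b) t) ^ 2 ≤ (1 / Real.Gamma b) ^ 2 := by
    have h1 : E t ≤ E 0 := hanti ht
    rw [hE0] at h1
    have h2 : 0 ≤ t * (S (D (c b)) t) ^ 2 := by positivity
    simp only [hE] at h1
    linarith
  have hgb : 0 < Real.Gamma b := Real.Gamma_pos_of_pos hb0
  calc |S (c b) t| = Real.sqrt ((S (c b) t) ^ 2) := (Real.sqrt_sq_eq_abs _).symm
  _ ≤ Real.sqrt ((1 / Real.Gamma b) ^ 2) := Real.sqrt_le_sqrt hle
  _ = 1 / Real.Gamma b := by rw [Real.sqrt_sq (by positivity)]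


end BesselAux


namespace BesselAux

lemma besselJ_le {ν x : ℝ} (hν : 0 ≤ ν) (hx : 0 < x) :
    |besselJ ν x| ≤ (x / 2) ^ ν / Real.Gamma (ν + 1) := by
  have hy : (0:ℝ) < x / 2 := by linarith
  have hb : (1:ℝ) ≤ ν + 1 := by linarith
  have hterm : ∀ m : ℕ, (-1:ℝ) ^ m * (x / 2) ^ (2 * (m : ℝ) + ν) /
      ((m.factorial : ℝ) * Real.Gamma ((m : ℝ) + ν + 1))
      = (x / 2) ^ ν * (c (ν + 1) m * ((x / 2) ^ 2) ^ m) := by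
    intro m
    rw [Real.rpow_add hy, c]
    have h1 : (x / 2) ^ (2 * (m : ℝ)) = ((x / 2) ^ 2) ^ m := by
      rw [show (2 * (m : ℝ)) = ((2 * m : ℕ) : ℝ) by push_cast; ring, Real.rpow_natCast, pow_mul]
    rw [h1, show (m : ℝ) + (ν + 1) = (m : ℝ) + ν + 1 by ring]
    ring
  have hS := abs_S_c_le hb (t := (x / 2) ^ 2) (by positivity)
  rw [besselJ, tsum_congr hterm, tsum_mul_left, abs_mul,
    abs_of_pos (Real.rpow_pos_of_pos hy ν)]
  rw [div_eq_mul_one_div ((x/2) ^ ν) (Real.Gamma (ν + 1))]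
  exact mul_le_mul_of_nonneg_left hS (Real.rpow_pos_of_pos hy ν).le

end BesselAux


open BesselAux

/-- For `α > −1/2`, `c > 0`:
`|j^α_{n,c}(x)| ≤ √(2(2n+α+1)) (cx/2)^{2n+α+1} / (√x Γ(2n+α+2))` for all `n` and `x > 0`;
consequently, for every `R > 0` there is `C > 0` with
`sup_{0 < x ≤ R} |j^α_{n,c}(x)| ≤ C n^{−2}` for all `n ≥ 1`. -/
theorem hankelSphBesselJ_pointwise_bound (α c : ℝ) (hα : -(1 / 2 : ℝ) < α) (hc : 0 < c) :
    (∀ (n : ℕ) (x : ℝ), 0 < x →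
      |hankelSphBesselJ α c n x| ≤
        Real.sqrt (2 * (2 * (n : ℝ) + α + 1)) * (c * x / 2) ^ (2 * (n : ℝ) + α + 1) /
          (Real.sqrt x * Real.Gamma (2 * (n : ℝ) + α + 2))) ∧
    ∀ R > (0 : ℝ), ∃ C > 0, ∀ n : ℕ, 1 ≤ n → ∀ x : ℝ, 0 < x → x ≤ R →
      |hankelSphBesselJ α c n x| ≤ C / (n : ℝ) ^ 2 := by
  have part1 : ∀ (n : ℕ) (x : ℝ), 0 < x →
      |hankelSphBesselJ α c n x| ≤
        Real.sqrt (2 * (2 * (n : ℝ) + α + 1)) * (c * x / 2) ^ (2 * (n : ℝ) + α + 1) /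
          (Real.sqrt x * Real.Gamma (2 * (n : ℝ) + α + 2)) := by
    intro n x hx
    set ν : ℝ := 2 * (n : ℝ) + α + 1 with hν
    have hν0 : 0 ≤ ν := by
      have : (0:ℝ) ≤ (n:ℝ) := Nat.cast_nonneg n
      simp only [hν]; linarith
    have hcx : 0 < c * x := mul_pos hc hx
    have hJ := besselJ_le hν0 hcx
    rw [show ν + 1 = 2 * (n : ℝ) + α + 2 by rw [hν]; ring] at hJ
    have hΓ : 0 < Real.Gamma (2 * (n : ℝ) + α + 2) := by
      apply Real.Gamma_pos_of_pos
      have : (0:ℝ) ≤ (n:ℝ) := Nat.cast_nonneg n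
      linarith
    have hsx : 0 < Real.sqrt x := Real.sqrt_pos.mpr hx
    have hsa : 0 ≤ Real.sqrt (2 * (2 * (n : ℝ) + α + 1)) := Real.sqrt_nonneg _
    rw [hankelSphBesselJ, abs_div, abs_mul, abs_of_nonneg hsa,
      abs_of_nonneg (Real.sqrt_nonneg x)]
    calc Real.sqrt (2 * (2 * (n : ℝ) + α + 1)) * |besselJ ν (c * x)| / Real.sqrt x
        ≤ Real.sqrt (2 * (2 * (n : ℝ) + α + 1)) *
            ((c * x / 2) ^ ν / Real.Gamma (2 * (n : ℝ) + α + 2)) / Real.sqrt x := by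
          gcongr
    _ = Real.sqrt (2 * (2 * (n : ℝ) + α + 1)) * (c * x / 2) ^ ν /
          (Real.sqrt x * Real.Gamma (2 * (n : ℝ) + α + 2)) := by
          rw [← mul_div_assoc, div_div,
            mul_comm (Real.Gamma (2 * (n : ℝ) + α + 2)) (Real.sqrt x)]
  refine ⟨part1, ?_⟩
  intro R hR
  set M : ℝ := max 1 R with hM
  set K : ℝ := max 1 (c * M / 2) with hK
  have hM1 : (1:ℝ) ≤ M := le_max_left _ _
  have hK1 : (1:ℝ) ≤ K := le_max_left _ _
  have hK0 : (0:ℝ) < K := by linarith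
  set A : ℝ := K ^ (α + 1 : ℝ) with hA
  have hA0 : 0 < A := Real.rpow_pos_of_pos hK0 _
  have hΓα : 0 < Real.Gamma (α + 2) := Real.Gamma_pos_of_pos (by linarith)
  have hα6 : (0:ℝ) < 2 * α + 6 := by linarith
  refine ⟨(2 * α + 6) * A * Real.exp 8 * Real.exp (K ^ 2) / Real.Gamma (α + 2), by positivity,
    ?_⟩
  intro n hn x hx hxR
  set ν : ℝ := 2 * (n : ℝ) + α + 1 with hν
  have hn1 : (1:ℝ) ≤ (n:ℝ) := by exact_mod_cast hn
  have hν0 : (0:ℝ) ≤ ν := by simp only [hν]; linarith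
  have hΓ : 0 < Real.Gamma (2 * (n : ℝ) + α + 2) := by
    apply Real.Gamma_pos_of_pos; linarith
  have hsx : 0 < Real.sqrt x := Real.sqrt_pos.mpr hx
  -- step (a) : (c x / 2)^ν / √x ≤ K ^ ν
  have ha : (c * x / 2) ^ ν / Real.sqrt x ≤ K ^ ν := by
    have hxM : x ≤ M := le_trans hxR (le_max_right _ _)
    have h1 : c * x / 2 = (c / 2) * x := by ring
    rw [h1, Real.mul_rpow (by positivity) hx.le, Real.sqrt_eq_rpow,
      mul_div_assoc, ← Real.rpow_sub hx]
    have h2 : x ^ (ν - 1 / 2) ≤ M ^ ν := by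
      calc x ^ (ν - 1 / 2) ≤ M ^ (ν - 1 / 2) := by
            apply Real.rpow_le_rpow hx.le hxM
            simp only [hν]; linarith
      _ ≤ M ^ ν := Real.rpow_le_rpow_of_exponent_le hM1 (by linarith)
    calc (c / 2) ^ ν * x ^ (ν - 1 / 2) ≤ (c / 2) ^ ν * M ^ ν := by
          apply mul_le_mul_of_nonneg_left h2 (Real.rpow_pos_of_pos (by positivity) ν).le
    _ = (c / 2 * M) ^ ν := (Real.mul_rpow (by positivity) (by linarith)).symm
    _ ≤ K ^ ν := by
        apply Real.rpow_le_rpow (by positivity) _ hν0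
        calc c / 2 * M = c * M / 2 := by ring
        _ ≤ K := le_max_right _ _
  -- step (b) : K ^ ν = A * (K^2)^n
  have hb : K ^ ν = A * (K ^ 2) ^ n := by
    rw [hν, show 2 * (n : ℝ) + α + 1 = ((2 * n : ℕ) : ℝ) + (α + 1) by push_cast; ring,
      Real.rpow_add hK0, Real.rpow_natCast, pow_mul, hA]
    ring
  -- step (c) : √(2(2n+α+1)) ≤ (2α+6) * n
  have hcc : Real.sqrt (2 * (2 * (n : ℝ) + α + 1)) ≤ (2 * α + 6) * n := by
    set y : ℝ := 2 * (2 * (n : ℝ) + α + 1) with hy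
    have hy1 : (1:ℝ) ≤ y := by simp only [hy]; linarith
    have h1 : Real.sqrt y ≤ y := by
      have h2 : Real.sqrt y ≤ Real.sqrt (y ^ 2) := Real.sqrt_le_sqrt (by nlinarith)
      rwa [Real.sqrt_sq (by linarith)] at h2
    have h3 : y ≤ (2 * α + 6) * n := by simp only [hy]; nlinarith
    linarith
  -- step (d) : Γ(α+2) * (n! * n!) ≤ Γ(2n+α+2)
  have hd : Real.Gamma (α + 2) * ((n.factorial : ℝ) * n.factorial) ≤
      Real.Gamma (2 * (n : ℝ) + α + 2) := by
    rw [show 2 * (n : ℝ) + α + 2 = (α + 2) + ((2 * n : ℕ) : ℝ) by push_cast; ring,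
      gamma_add_nat (α + 2) (by linarith) (2 * n)]
    have hp : ((n.factorial : ℝ) * n.factorial) ≤ ∏ j ∈ Finset.range (2 * n), (α + 2 + j) := by
      have hnn : (n.factorial * n.factorial : ℕ) ≤ (2 * n).factorial := by
        apply Nat.le_of_dvd (Nat.factorial_pos _)
        have := Nat.factorial_mul_factorial_dvd_factorial_add n n
        rwa [← two_mul] at this
      have hfac : ((2 * n).factorial : ℝ) ≤ ∏ j ∈ Finset.range (2 * n), (α + 2 + j) := by
        rw [← Finset.prod_range_add_one_eq_factorial]
        push_cast
        apply Finset.prod_le_prod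
        · intro j _; positivity
        · intro j _
          have : (0:ℝ) ≤ (j:ℝ) := Nat.cast_nonneg j
          linarith
      calc ((n.factorial : ℝ) * n.factorial) ≤ ((2 * n).factorial : ℝ) := by exact_mod_cast hnn
      _ ≤ _ := hfac
    exact mul_le_mul_of_nonneg_left hp hΓα.le
  -- put it together
  have key := part1 n x hx
  have hfn : (0:ℝ) < (n.factorial : ℝ) := by exact_mod_cast n.factorial_pos
  calc |hankelSphBesselJ α c n x|
      ≤ Real.sqrt (2 * (2 * (n : ℝ) + α + 1)) * (c * x / 2) ^ ν /
          (Real.sqrt x * Real.Gamma (2 * (n : ℝ) + α + 2)) := key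
  _ = Real.sqrt (2 * (2 * (n : ℝ) + α + 1)) * ((c * x / 2) ^ ν / Real.sqrt x) /
        Real.Gamma (2 * (n : ℝ) + α + 2) := by
      rw [← mul_div_assoc, div_div]
  _ ≤ ((2 * α + 6) * n) * (K ^ ν) / (Real.Gamma (α + 2) * ((n.factorial : ℝ) * n.factorial)) := by
      apply div_le_div₀ (by positivity) _ (by positivity) hd
      exact mul_le_mul hcc ha (by positivity) (by positivity)
  _ = ((2 * α + 6) * n) * (A * (K ^ 2) ^ n) /
        (Real.Gamma (α + 2) * ((n.factorial : ℝ) * n.factorial)) := by rw [hb]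
  _ ≤ (2 * α + 6) * A * Real.exp 8 * Real.exp (K ^ 2) / Real.Gamma (α + 2) / (n : ℝ) ^ 2 := by
      rw [div_div, div_le_div_iff₀ (by positivity) (by positivity)]
      have f1 : (8:ℝ) ^ n ≤ Real.exp 8 * n.factorial := by
        have := Real.pow_div_factorial_le_exp (x := 8) (by norm_num) n
        rw [div_le_iff₀ hfn] at this
        linarith
      have f2 : (K ^ 2) ^ n ≤ Real.exp (K ^ 2) * n.factorial := by
        have := Real.pow_div_factorial_le_exp (x := K ^ 2) (by positivity) n
        rw [div_le_iff₀ hfn] at this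
        linarith
      have f3 : (n:ℝ) ^ 3 ≤ 8 ^ n := by
        have h1 : (n:ℝ) ≤ 2 ^ n := by exact_mod_cast (Nat.lt_two_pow_self (n := n)).le
        calc (n:ℝ) ^ 3 ≤ ((2:ℝ) ^ n) ^ 3 := by
              apply pow_le_pow_left₀ (Nat.cast_nonneg n) h1
        _ = 8 ^ n := by rw [← pow_mul, mul_comm, pow_mul]; norm_num
      calc (2 * α + 6) * ↑n * (A * (K ^ 2) ^ n) * (Real.Gamma (α + 2) * (n:ℝ) ^ 2)
          = Real.Gamma (α + 2) * ((2 * α + 6) * A * ((n:ℝ) ^ 3 * (K ^ 2) ^ n)) := by ring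
      _ ≤ Real.Gamma (α + 2) * ((2 * α + 6) * A * ((8:ℝ) ^ n * (K ^ 2) ^ n)) := by
          gcongr
      _ ≤ Real.Gamma (α + 2) * ((2 * α + 6) * A *
            ((Real.exp 8 * n.factorial) * (Real.exp (K ^ 2) * n.factorial))) := by
          gcongr
      _ = (2 * α + 6) * A * Real.exp 8 * Real.exp (K ^ 2) *
            (Real.Gamma (α + 2) * ((n.factorial : ℝ) * n.factorial)) := by ring
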